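/- Define, for t > 1, x(t) = t^{-3/2}, y(t) = (1 - 2t^{-3/2})·exp(t^{3/2}), z(t) = (1 + 2t^{-3/2})·exp(-t^{3/2}). Then the triple (x, y, z) satisfies the Tzitzeica curve equation with constant α = 1/2: W(x',y',z')(t) = (1/2) · (W(x,y,z)(t))² for all t > 1. -/

import Mathlib

/-- The Wronskian of three functions `x, y, z : ℝ → ℝ`. -/
noncomputable def W3 (x y z : ℝ → ℝ) (t : ℝ) : ℝ :=
  Matrix.det !![x t, y t, z t;
    deriv x t, deriv y t, deriv z t;
    deriv (deriv x) t, deriv (deriv y) t, deriv (deriv z) t]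

noncomputable def xT : ℝ → ℝ := fun t => t ^ (-(3 : ℝ) / 2)
noncomputable def yT : ℝ → ℝ := fun t =>
  (1 - 2 * t ^ (-(3 : ℝ) / 2)) * Real.exp (t ^ ((3 : ℝ) / 2))
noncomputable def zT : ℝ → ℝ := fun t =>
  (1 + 2 * t ^ (-(3 : ℝ) / 2)) * Real.exp (-(t ^ ((3 : ℝ) / 2)))

/- Auxiliary closed forms for the derivatives. -/
noncomputable def x1 : ℝ → ℝ := fun t => -(3:ℝ)/2 * t ^ (-(5:ℝ)/2)
noncomputable def x2 : ℝ → ℝ := fun t => (15:ℝ)/4 * t ^ (-(7:ℝ)/2)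
noncomputable def x3 : ℝ → ℝ := fun t => -(105:ℝ)/8 * t ^ (-(9:ℝ)/2)

noncomputable def y1 : ℝ → ℝ := fun t =>
  ((3:ℝ)/2 * t ^ ((1:ℝ)/2) - 3 * t ^ (-(2:ℝ)/2) + 3 * t ^ (-(5:ℝ)/2)) *
    Real.exp (t ^ ((3:ℝ)/2))
noncomputable def y2 : ℝ → ℝ := fun t =>
  ((9:ℝ)/4 * t ^ ((2:ℝ)/2) - (15:ℝ)/4 * t ^ (-(1:ℝ)/2) + (15:ℝ)/2 * t ^ (-(4:ℝ)/2)
    - (15:ℝ)/2 * t ^ (-(7:ℝ)/2)) * Real.exp (t ^ ((3:ℝ)/2))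
noncomputable def y3 : ℝ → ℝ := fun t =>
  ((27:ℝ)/8 * t ^ ((3:ℝ)/2) - (27:ℝ)/8 + (105:ℝ)/8 * t ^ (-(3:ℝ)/2)
    - (105:ℝ)/4 * t ^ (-(6:ℝ)/2) + (105:ℝ)/4 * t ^ (-(9:ℝ)/2)) * Real.exp (t ^ ((3:ℝ)/2))

noncomputable def z1 : ℝ → ℝ := fun t =>
  (-(3:ℝ)/2 * t ^ ((1:ℝ)/2) - 3 * t ^ (-(2:ℝ)/2) - 3 * t ^ (-(5:ℝ)/2)) *
    Real.exp (-(t ^ ((3:ℝ)/2)))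
noncomputable def z2 : ℝ → ℝ := fun t =>
  ((9:ℝ)/4 * t ^ ((2:ℝ)/2) + (15:ℝ)/4 * t ^ (-(1:ℝ)/2) + (15:ℝ)/2 * t ^ (-(4:ℝ)/2)
    + (15:ℝ)/2 * t ^ (-(7:ℝ)/2)) * Real.exp (-(t ^ ((3:ℝ)/2)))
noncomputable def z3 : ℝ → ℝ := fun t =>
  (-(27:ℝ)/8 * t ^ ((3:ℝ)/2) - (27:ℝ)/8 - (105:ℝ)/8 * t ^ (-(3:ℝ)/2)
    - (105:ℝ)/4 * t ^ (-(6:ℝ)/2) - (105:ℝ)/4 * t ^ (-(9:ℝ)/2)) * Real.exp (-(t ^ ((3:ℝ)/2)))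

lemma rpos {t : ℝ} (ht : 0 < t) (a : ℝ) (n : ℕ) (h : a = n / 2) :
    t ^ a = (t ^ ((1:ℝ)/2)) ^ n := by
  subst h
  rw [← Real.rpow_natCast (t ^ ((1:ℝ)/2)) n, ← Real.rpow_mul ht.le]
  congr 1
  ring

lemma rneg {t : ℝ} (ht : 0 < t) (a : ℝ) (n : ℕ) (h : a = -((n : ℝ) / 2)) :
    t ^ a = ((t ^ ((1:ℝ)/2)) ^ n)⁻¹ := by
  subst h
  rw [Real.rpow_neg ht.le, rpos ht _ n rfl]

lemma hrp {t : ℝ} (ht : 0 < t) (p : ℝ) :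
    HasDerivAt (fun u : ℝ => u ^ p) (p * t ^ (p - 1)) t :=
  Real.hasDerivAt_rpow_const (Or.inl ht.ne')

lemma hx1 {t : ℝ} (ht : 0 < t) : HasDerivAt xT (x1 t) t := by
  have h := hrp ht (-(3:ℝ)/2)
  rw [show (-(3:ℝ)/2 - 1) = -(5:ℝ)/2 by norm_num] at h
  exact h

lemma hx2 {t : ℝ} (ht : 0 < t) : HasDerivAt x1 (x2 t) t := by
  have h := (hrp ht (-(5:ℝ)/2)).const_mul (-(3:ℝ)/2)
  rw [show (-(5:ℝ)/2 - 1) = -(7:ℝ)/2 by norm_num] at h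
  convert h using 1
  · rfl
  · rfl
  · rfl
  unfold x2; ring

lemma hx3 {t : ℝ} (ht : 0 < t) : HasDerivAt x2 (x3 t) t := by
  have h := (hrp ht (-(7:ℝ)/2)).const_mul ((15:ℝ)/4)
  rw [show (-(7:ℝ)/2 - 1) = -(9:ℝ)/2 by norm_num] at h
  convert h using 1
  · rfl
  · rfl
  · rfl
  unfold x3; ring

/-- derivative of `exp (t ^ (3/2))` -/
lemma hE {t : ℝ} (ht : 0 < t) :
    HasDerivAt (fun u : ℝ => Real.exp (u ^ ((3:ℝ)/2)))
      (Real.exp (t ^ ((3:ℝ)/2)) * ((3:ℝ)/2 * t ^ ((1:ℝ)/2))) t := by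
  have h := (hrp ht ((3:ℝ)/2)).exp
  rw [show ((3:ℝ)/2 - 1) = (1:ℝ)/2 by norm_num] at h
  exact h

lemma hF {t : ℝ} (ht : 0 < t) :
    HasDerivAt (fun u : ℝ => Real.exp (-(u ^ ((3:ℝ)/2))))
      (Real.exp (-(t ^ ((3:ℝ)/2))) * (-((3:ℝ)/2 * t ^ ((1:ℝ)/2)))) t := by
  have h := ((hrp ht ((3:ℝ)/2)).neg).exp
  rw [show ((3:ℝ)/2 - 1) = (1:ℝ)/2 by norm_num] at h
  exact h

section
variable {t : ℝ}

lemma hy1 (ht : 0 < t) : HasDerivAt yT (y1 t) t := by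
  have hp := hrp ht (-(3:ℝ)/2)
  rw [show (-(3:ℝ)/2 - 1) = -(5:ℝ)/2 by norm_num] at hp
  have h := (((hasDerivAt_const t (1:ℝ)).sub (hp.const_mul 2)).mul (hE ht))
  convert h using 1
  · rfl
  · rfl
  · rfl
  unfold y1
  simp only [Pi.sub_apply, Pi.add_apply]
  have hs : t ^ ((1:ℝ)/2) ≠ 0 := (Real.rpow_pos_of_pos ht _).ne'
  simp only [rpos ht ((3:ℝ)/2) 3 (by norm_num), rpos ht ((2:ℝ)/2) 2 (by norm_num),
    rneg ht (-(1:ℝ)/2) 1 (by norm_num), rneg ht (-(2:ℝ)/2) 2 (by norm_num),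
    rneg ht (-(3:ℝ)/2) 3 (by norm_num), rneg ht (-(4:ℝ)/2) 4 (by norm_num),
    rneg ht (-(5:ℝ)/2) 5 (by norm_num), rneg ht (-(6:ℝ)/2) 6 (by norm_num),
    rneg ht (-(7:ℝ)/2) 7 (by norm_num), rneg ht (-(9:ℝ)/2) 9 (by norm_num)]
  field_simp
  ring

lemma hy2 (ht : 0 < t) : HasDerivAt y1 (y2 t) t := by
  have hp1 := hrp ht ((1:ℝ)/2)
  rw [show ((1:ℝ)/2 - 1) = -(1:ℝ)/2 by norm_num] at hp1
  have hp2 := hrp ht (-(2:ℝ)/2)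
  rw [show (-(2:ℝ)/2 - 1) = -(4:ℝ)/2 by norm_num] at hp2
  have hp3 := hrp ht (-(5:ℝ)/2)
  rw [show (-(5:ℝ)/2 - 1) = -(7:ℝ)/2 by norm_num] at hp3
  have h := (((hp1.const_mul ((3:ℝ)/2)).sub (hp2.const_mul 3)).add
      (hp3.const_mul 3)).mul (hE ht)
  convert h using 1
  · rfl
  · rfl
  · rfl
  unfold y2
  simp only [Pi.sub_apply, Pi.add_apply]
  have hs : t ^ ((1:ℝ)/2) ≠ 0 := (Real.rpow_pos_of_pos ht _).ne'
  simp only [rpos ht ((3:ℝ)/2) 3 (by norm_num), rpos ht ((2:ℝ)/2) 2 (by norm_num),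
    rneg ht (-(1:ℝ)/2) 1 (by norm_num), rneg ht (-(2:ℝ)/2) 2 (by norm_num),
    rneg ht (-(3:ℝ)/2) 3 (by norm_num), rneg ht (-(4:ℝ)/2) 4 (by norm_num),
    rneg ht (-(5:ℝ)/2) 5 (by norm_num), rneg ht (-(6:ℝ)/2) 6 (by norm_num),
    rneg ht (-(7:ℝ)/2) 7 (by norm_num), rneg ht (-(9:ℝ)/2) 9 (by norm_num)]
  field_simp
  ring

lemma hy3 (ht : 0 < t) : HasDerivAt y2 (y3 t) t := by
  have hp1 := hrp ht ((2:ℝ)/2)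
  rw [show ((2:ℝ)/2 - 1) = (0:ℝ) by norm_num] at hp1
  have hp2 := hrp ht (-(1:ℝ)/2)
  rw [show (-(1:ℝ)/2 - 1) = -(3:ℝ)/2 by norm_num] at hp2
  have hp3 := hrp ht (-(4:ℝ)/2)
  rw [show (-(4:ℝ)/2 - 1) = -(6:ℝ)/2 by norm_num] at hp3
  have hp4 := hrp ht (-(7:ℝ)/2)
  rw [show (-(7:ℝ)/2 - 1) = -(9:ℝ)/2 by norm_num] at hp4
  have h := ((((hp1.const_mul ((9:ℝ)/4)).sub (hp2.const_mul ((15:ℝ)/4))).add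
      (hp3.const_mul ((15:ℝ)/2))).sub (hp4.const_mul ((15:ℝ)/2))).mul (hE ht)
  convert h using 1
  · rfl
  · rfl
  · rfl
  unfold y3
  simp only [Pi.sub_apply, Pi.add_apply]
  have hs : t ^ ((1:ℝ)/2) ≠ 0 := (Real.rpow_pos_of_pos ht _).ne'
  simp only [Real.rpow_zero]
  simp only [rpos ht ((3:ℝ)/2) 3 (by norm_num), rpos ht ((2:ℝ)/2) 2 (by norm_num),
    rneg ht (-(1:ℝ)/2) 1 (by norm_num), rneg ht (-(2:ℝ)/2) 2 (by norm_num),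
    rneg ht (-(3:ℝ)/2) 3 (by norm_num), rneg ht (-(4:ℝ)/2) 4 (by norm_num),
    rneg ht (-(5:ℝ)/2) 5 (by norm_num), rneg ht (-(6:ℝ)/2) 6 (by norm_num),
    rneg ht (-(7:ℝ)/2) 7 (by norm_num), rneg ht (-(9:ℝ)/2) 9 (by norm_num)]
  field_simp
  ring

lemma hz1 (ht : 0 < t) : HasDerivAt zT (z1 t) t := by
  have hp := hrp ht (-(3:ℝ)/2)
  rw [show (-(3:ℝ)/2 - 1) = -(5:ℝ)/2 by norm_num] at hp
  have h := (((hasDerivAt_const t (1:ℝ)).add (hp.const_mul 2)).mul (hF ht))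
  convert h using 1
  · rfl
  · rfl
  · rfl
  unfold z1
  simp only [Pi.sub_apply, Pi.add_apply]
  have hs : t ^ ((1:ℝ)/2) ≠ 0 := (Real.rpow_pos_of_pos ht _).ne'
  simp only [rpos ht ((3:ℝ)/2) 3 (by norm_num), rpos ht ((2:ℝ)/2) 2 (by norm_num),
    rneg ht (-(1:ℝ)/2) 1 (by norm_num), rneg ht (-(2:ℝ)/2) 2 (by norm_num),
    rneg ht (-(3:ℝ)/2) 3 (by norm_num), rneg ht (-(4:ℝ)/2) 4 (by norm_num),
    rneg ht (-(5:ℝ)/2) 5 (by norm_num), rneg ht (-(6:ℝ)/2) 6 (by norm_num),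
    rneg ht (-(7:ℝ)/2) 7 (by norm_num), rneg ht (-(9:ℝ)/2) 9 (by norm_num),
    Real.exp_neg]
  field_simp
  ring

lemma hz2 (ht : 0 < t) : HasDerivAt z1 (z2 t) t := by
  have hp1 := hrp ht ((1:ℝ)/2)
  rw [show ((1:ℝ)/2 - 1) = -(1:ℝ)/2 by norm_num] at hp1
  have hp2 := hrp ht (-(2:ℝ)/2)
  rw [show (-(2:ℝ)/2 - 1) = -(4:ℝ)/2 by norm_num] at hp2
  have hp3 := hrp ht (-(5:ℝ)/2)
  rw [show (-(5:ℝ)/2 - 1) = -(7:ℝ)/2 by norm_num] at hp3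
  have h := (((hp1.const_mul (-(3:ℝ)/2)).sub (hp2.const_mul 3)).sub
      (hp3.const_mul 3)).mul (hF ht)
  convert h using 1
  · rfl
  · rfl
  · rfl
  unfold z2
  simp only [Pi.sub_apply, Pi.add_apply]
  have hs : t ^ ((1:ℝ)/2) ≠ 0 := (Real.rpow_pos_of_pos ht _).ne'
  simp only [rpos ht ((3:ℝ)/2) 3 (by norm_num), rpos ht ((2:ℝ)/2) 2 (by norm_num),
    rneg ht (-(1:ℝ)/2) 1 (by norm_num), rneg ht (-(2:ℝ)/2) 2 (by norm_num),
    rneg ht (-(3:ℝ)/2) 3 (by norm_num), rneg ht (-(4:ℝ)/2) 4 (by norm_num),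
    rneg ht (-(5:ℝ)/2) 5 (by norm_num), rneg ht (-(6:ℝ)/2) 6 (by norm_num),
    rneg ht (-(7:ℝ)/2) 7 (by norm_num), rneg ht (-(9:ℝ)/2) 9 (by norm_num),
    Real.exp_neg]
  field_simp
  ring

lemma hz3 (ht : 0 < t) : HasDerivAt z2 (z3 t) t := by
  have hp1 := hrp ht ((2:ℝ)/2)
  rw [show ((2:ℝ)/2 - 1) = (0:ℝ) by norm_num] at hp1
  have hp2 := hrp ht (-(1:ℝ)/2)
  rw [show (-(1:ℝ)/2 - 1) = -(3:ℝ)/2 by norm_num] at hp2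
  have hp3 := hrp ht (-(4:ℝ)/2)
  rw [show (-(4:ℝ)/2 - 1) = -(6:ℝ)/2 by norm_num] at hp3
  have hp4 := hrp ht (-(7:ℝ)/2)
  rw [show (-(7:ℝ)/2 - 1) = -(9:ℝ)/2 by norm_num] at hp4
  have h := ((((hp1.const_mul ((9:ℝ)/4)).add (hp2.const_mul ((15:ℝ)/4))).add
      (hp3.const_mul ((15:ℝ)/2))).add (hp4.const_mul ((15:ℝ)/2))).mul (hF ht)
  convert h using 1
  · rfl
  · rfl
  · rfl
  unfold z3
  simp only [Pi.sub_apply, Pi.add_apply]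
  have hs : t ^ ((1:ℝ)/2) ≠ 0 := (Real.rpow_pos_of_pos ht _).ne'
  simp only [Real.rpow_zero]
  simp only [rpos ht ((3:ℝ)/2) 3 (by norm_num), rpos ht ((2:ℝ)/2) 2 (by norm_num),
    rneg ht (-(1:ℝ)/2) 1 (by norm_num), rneg ht (-(2:ℝ)/2) 2 (by norm_num),
    rneg ht (-(3:ℝ)/2) 3 (by norm_num), rneg ht (-(4:ℝ)/2) 4 (by norm_num),
    rneg ht (-(5:ℝ)/2) 5 (by norm_num), rneg ht (-(6:ℝ)/2) 6 (by norm_num),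
    rneg ht (-(7:ℝ)/2) 7 (by norm_num), rneg ht (-(9:ℝ)/2) 9 (by norm_num),
    Real.exp_neg]
  field_simp
  ring

lemma dx1 (ht : 0 < t) : deriv xT t = x1 t := (hx1 ht).deriv
lemma dy1 (ht : 0 < t) : deriv yT t = y1 t := (hy1 ht).deriv
lemma dz1 (ht : 0 < t) : deriv zT t = z1 t := (hz1 ht).deriv

lemma dx2 (ht : 0 < t) : deriv (deriv xT) t = x2 t := by
  have h : deriv xT =ᶠ[nhds t] x1 := (eventually_gt_nhds ht).mono fun u hu => dx1 hu
  rw [h.deriv_eq]; exact (hx2 ht).deriv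

lemma dy2 (ht : 0 < t) : deriv (deriv yT) t = y2 t := by
  have h : deriv yT =ᶠ[nhds t] y1 := (eventually_gt_nhds ht).mono fun u hu => dy1 hu
  rw [h.deriv_eq]; exact (hy2 ht).deriv

lemma dz2 (ht : 0 < t) : deriv (deriv zT) t = z2 t := by
  have h : deriv zT =ᶠ[nhds t] z1 := (eventually_gt_nhds ht).mono fun u hu => dz1 hu
  rw [h.deriv_eq]; exact (hz2 ht).deriv

lemma dx3 (ht : 0 < t) : deriv (deriv (deriv xT)) t = x3 t := by
  have h : deriv (deriv xT) =ᶠ[nhds t] x2 := (eventually_gt_nhds ht).mono fun u hu => dx2 hu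
  rw [h.deriv_eq]; exact (hx3 ht).deriv

lemma dy3 (ht : 0 < t) : deriv (deriv (deriv yT)) t = y3 t := by
  have h : deriv (deriv yT) =ᶠ[nhds t] y2 := (eventually_gt_nhds ht).mono fun u hu => dy2 hu
  rw [h.deriv_eq]; exact (hy3 ht).deriv

lemma dz3 (ht : 0 < t) : deriv (deriv (deriv zT)) t = z3 t := by
  have h : deriv (deriv zT) =ᶠ[nhds t] z2 := (eventually_gt_nhds ht).mono fun u hu => dz2 hu
  rw [h.deriv_eq]; exact (hz3 ht).deriv

end

set_option maxHeartbeats 4000000 in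
theorem stmt_16 :
    ∀ t : ℝ, 1 < t →
      W3 (deriv xT) (deriv yT) (deriv zT) t = (1 / 2) * (W3 xT yT zT t) ^ 2 := by
  intro t ht1
  have ht : (0:ℝ) < t := lt_trans one_pos ht1
  unfold W3
  simp only [Matrix.det_fin_three, Matrix.cons_val', Matrix.cons_val_zero, Matrix.cons_val_one,
    Matrix.head_cons, Matrix.empty_val', Matrix.cons_val_fin_one, Matrix.head_fin_const,
    Matrix.cons_val_two, Matrix.tail_cons, Matrix.of_apply]
  rw [dx1 ht, dy1 ht, dz1 ht, dx2 ht, dy2 ht, dz2 ht, dx3 ht, dy3 ht, dz3 ht]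
  unfold xT yT zT x1 x2 x3 y1 y2 y3 z1 z2 z3
  have hs : t ^ ((1:ℝ)/2) ≠ 0 := (Real.rpow_pos_of_pos ht _).ne'
  simp only [rpos ht ((3:ℝ)/2) 3 (by norm_num), rpos ht ((2:ℝ)/2) 2 (by norm_num),
    rneg ht (-(1:ℝ)/2) 1 (by norm_num), rneg ht (-(2:ℝ)/2) 2 (by norm_num),
    rneg ht (-(3:ℝ)/2) 3 (by norm_num), rneg ht (-(4:ℝ)/2) 4 (by norm_num),
    rneg ht (-(5:ℝ)/2) 5 (by norm_num), rneg ht (-(6:ℝ)/2) 6 (by norm_num),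
    rneg ht (-(7:ℝ)/2) 7 (by norm_num), rneg ht (-(9:ℝ)/2) 9 (by norm_num),
    Real.exp_neg]
  have hex : Real.exp ((t ^ ((1:ℝ)/2)) ^ 3) ≠ 0 := Real.exp_ne_zero _
  field_simp
  ring
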